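/- Fix a real number p with 0 < p < 1 and ε with 0 < ε < 1/2, set q = 1/p, and for each n let r = r(n) = ⌊z(n,p) − ε⌋. Then for all sufficiently large n, T_{(1,0,0,0)} ≤ r²/n, where T_{(1,0,0,0)} = r·[(n−2r)!/((r−1)!·r!·(n−4r+1)!)] / [n!/(r!·r!·(n−2r)!)]. -/

import Mathlib

open Finset Filter

noncomputable section

/-- `z(n,p) = 2 log_q n − 2 log_q log_q n + 2 log_q (e/2) + 1`, where `q = 1/p`. -/
def zf (p : ℝ) (n : ℕ) : ℝ :=
  2 * Real.logb p⁻¹ n - 2 * Real.logb p⁻¹ (Real.logb p⁻¹ n)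
    + 2 * Real.logb p⁻¹ (Real.exp 1 / 2) + 1

lemma asc_mono' {m n : ℕ} (h : m ≤ n) (k : ℕ) : m.ascFactorial k ≤ n.ascFactorial k := by
  induction k with
  | zero => simp
  | succ k ih =>
    rw [Nat.ascFactorial_succ, Nat.ascFactorial_succ]
    exact Nat.mul_le_mul (by omega) ih

lemma key_nat' (n r : ℕ) (hr : 1 ≤ r) (hn : 4 * r ≤ n) :
    n * ((n - 2 * r).factorial) ^ 2 ≤ (n - 4 * r + 1).factorial * n.factorial := by
  set a := n - 4 * r + 1 with ha
  set b := n - 2 * r with hb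
  have h1 : a.factorial * (a + 1).ascFactorial (2 * r - 1) = b.factorial := by
    have := Nat.factorial_mul_ascFactorial a (2 * r - 1)
    rwa [show a + (2 * r - 1) = b by omega] at this
  have h2 : b.factorial * (b + 1).ascFactorial (2 * r) = n.factorial := by
    have := Nat.factorial_mul_ascFactorial b (2 * r)
    rwa [show b + 2 * r = n by omega] at this
  have h3 : (b + 1).ascFactorial (2 * r) = n * (b + 1).ascFactorial (2 * r - 1) := by
    rw [show 2 * r = (2 * r - 1) + 1 by omega, Nat.ascFactorial_succ]
    congr 1
    omega
  have e1 : n * b.factorial ^ 2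
      = n * a.factorial * b.factorial * ((a + 1).ascFactorial (2 * r - 1)) := by
    rw [pow_two, ← h1]; ring
  have e2 : a.factorial * n.factorial
      = n * a.factorial * b.factorial * ((b + 1).ascFactorial (2 * r - 1)) := by
    rw [← h2, h3]; ring
  rw [e1, e2]
  exact Nat.mul_le_mul_left _ (asc_mono' (by omega) _)

lemma key_real' (n r : ℕ) (hr : 1 ≤ r) (hn : 4 * r ≤ n) :
    (r : ℝ) *
        (((n - 2 * r).factorial : ℝ) /
          (((r - 1).factorial : ℝ) * r.factorial * (n - 4 * r + 1).factorial)) /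
        ((n.factorial : ℝ) / ((r.factorial : ℝ) * r.factorial * (n - 2 * r).factorial))
      ≤ (r : ℝ) ^ 2 / n := by
  have hn0 : 0 < n := by omega
  have hA : (0:ℝ) < ((n - 2 * r).factorial : ℝ) := by positivity
  have hB : (0:ℝ) < (((r - 1).factorial : ℝ)) := by positivity
  have hR : (0:ℝ) < ((r.factorial : ℝ)) := by positivity
  have hC : (0:ℝ) < (((n - 4 * r + 1).factorial : ℝ)) := by positivity
  have hN : (0:ℝ) < ((n.factorial : ℝ)) := by positivity
  have hnr : (0:ℝ) < (n:ℝ) := by exact_mod_cast hn0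
  have hrB : (r : ℝ) * ((r - 1).factorial : ℝ) = (r.factorial : ℝ) := by
    exact_mod_cast Nat.mul_factorial_pred (by omega : r ≠ 0)
  have key : (n : ℝ) * ((n - 2 * r).factorial : ℝ) ^ 2
      ≤ ((n - 4 * r + 1).factorial : ℝ) * (n.factorial : ℝ) := by
    exact_mod_cast key_nat' n r hr hn
  have step : ((n - 2 * r).factorial : ℝ) ^ 2 / (((n - 4 * r + 1).factorial : ℝ) * n.factorial)
      ≤ 1 / n := by
    rw [div_le_div_iff₀ (by positivity) hnr]
    linarith
  have eqL : (r : ℝ) *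
        (((n - 2 * r).factorial : ℝ) /
          (((r - 1).factorial : ℝ) * r.factorial * (n - 4 * r + 1).factorial)) /
        ((n.factorial : ℝ) / ((r.factorial : ℝ) * r.factorial * (n - 2 * r).factorial))
      = (r : ℝ) ^ 2 *
        (((n - 2 * r).factorial : ℝ) ^ 2 / (((n - 4 * r + 1).factorial : ℝ) * n.factorial)) := by
    rw [← hrB]
    field_simp
  rw [eqL]
  calc (r : ℝ) ^ 2 * (((n - 2 * r).factorial : ℝ) ^ 2 /
        (((n - 4 * r + 1).factorial : ℝ) * n.factorial))
      ≤ (r : ℝ) ^ 2 * (1 / n) := by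
        apply mul_le_mul_of_nonneg_left step (by positivity)
    _ = (r : ℝ) ^ 2 / n := by ring

lemma log_lin' (c : ℝ) (hc : 0 < c) : ∀ᶠ x : ℝ in atTop, Real.log x ≤ c * x := by
  filter_upwards [Real.isLittleO_log_id_atTop.def hc, eventually_ge_atTop (0:ℝ)] with x h1 h2
  simp only [Real.norm_eq_abs, id] at h1
  calc Real.log x ≤ |Real.log x| := le_abs_self _
    _ ≤ c * |x| := h1
    _ = c * x := by rw [abs_of_nonneg h2]

lemma eventual_bounds' (p ε : ℝ) (hp0 : 0 < p) (hp1 : p < 1) (hε : 0 < ε) :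
    ∀ᶠ n : ℕ in atTop,
      1 ≤ ⌊zf p n - ε⌋.toNat ∧ 4 * ⌊zf p n - ε⌋.toNat ≤ n := by
  have hq : (1:ℝ) < p⁻¹ := (one_lt_inv₀ hp0).mpr hp1
  set L := Real.log p⁻¹ with hLdef
  have hL : 0 < L := Real.log_pos hq
  set C := 2 * Real.logb p⁻¹ (Real.exp 1 / 2) with hCdef
  have hy : Tendsto (fun n : ℕ => Real.logb p⁻¹ n) atTop atTop :=
    (Real.tendsto_logb_atTop hq).comp tendsto_natCast_atTop_atTop
  have h1 : ∀ᶠ n : ℕ in atTop,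
      Real.log (Real.logb p⁻¹ n) ≤ (L/2) * Real.logb p⁻¹ n :=
    hy.eventually (log_lin' (L/2) (by positivity))
  have h2 : ∀ᶠ n : ℕ in atTop, ε - C ≤ Real.logb p⁻¹ n :=
    hy.eventually (eventually_ge_atTop _)
  have h2' : ∀ᶠ n : ℕ in atTop, (1:ℝ) ≤ Real.logb p⁻¹ n :=
    hy.eventually (eventually_ge_atTop _)
  have h3 : ∀ᶠ n : ℕ in atTop, Real.log (n:ℝ) ≤ (L/16) * n :=
    tendsto_natCast_atTop_atTop.eventually (log_lin' (L/16) (by positivity))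
  have h4 : ∀ᶠ n : ℕ in atTop, 8 * (C + 1) ≤ (n:ℝ) :=
    tendsto_natCast_atTop_atTop.eventually (eventually_ge_atTop _)
  filter_upwards [h1, h2, h2', h3, h4] with n b1 b2 b3 b4 b5
  have hyv : Real.logb p⁻¹ (Real.logb p⁻¹ n)
      = Real.log (Real.logb p⁻¹ n) / L := by rw [Real.logb, hLdef]
  have hyv2 : Real.logb p⁻¹ n = Real.log n / L := by rw [Real.logb, hLdef]
  have hlogb2 : Real.logb p⁻¹ (Real.logb p⁻¹ n) ≤ Real.logb p⁻¹ n / 2 := by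
    rw [hyv, div_le_div_iff₀ hL (by norm_num)]
    linarith
  have hlogb0 : 0 ≤ Real.logb p⁻¹ (Real.logb p⁻¹ n) := Real.logb_nonneg hq b3
  have hzlow : 1 + ε ≤ zf p n := by
    have : Real.logb p⁻¹ n ≤ zf p n - C - 1 := by
      simp only [zf, ← hCdef]
      linarith
    linarith
  have hzhigh : zf p n ≤ (n:ℝ)/4 := by
    have hyn : Real.logb p⁻¹ n ≤ (n:ℝ)/16 := by
      rw [hyv2, div_le_div_iff₀ hL (by norm_num)]
      linarith
    simp only [zf, ← hCdef]
    linarith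
  constructor
  · have : (1:ℤ) ≤ ⌊zf p n - ε⌋ := Int.le_floor.mpr (by push_cast; linarith)
    omega
  · rcases le_or_gt ⌊zf p n - ε⌋ 0 with h | h
    · have : ⌊zf p n - ε⌋.toNat = 0 := Int.toNat_of_nonpos h
      omega
    · have hcast : ((⌊zf p n - ε⌋.toNat : ℕ) : ℝ) = ((⌊zf p n - ε⌋ : ℤ) : ℝ) := by
        exact_mod_cast Int.toNat_of_nonneg h.le
      have hle : ((⌊zf p n - ε⌋.toNat : ℕ) : ℝ) ≤ (n:ℝ)/4 := by
        rw [hcast]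
        calc ((⌊zf p n - ε⌋ : ℤ) : ℝ) ≤ zf p n - ε := Int.floor_le _
          _ ≤ (n:ℝ)/4 := by linarith
      have h4r : ((4 * ⌊zf p n - ε⌋.toNat : ℕ) : ℝ) ≤ (n:ℝ) := by push_cast; linarith
      exact_mod_cast h4r

/-- For `r = r(n) = ⌊z(n,p) − ε⌋` one has, for all sufficiently large `n`,
`T_{(1,0,0,0)} ≤ r²/n`, where
`T_{(1,0,0,0)} = r·[(n−2r)!/((r−1)!·r!·(n−4r+1)!)] / [n!/(r!·r!·(n−2r)!)]`. -/
theorem stmt12 (p ε : ℝ) (hp0 : 0 < p) (hp1 : p < 1) (hε : 0 < ε) (hε' : ε < 1/2) :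
    ∀ᶠ n : ℕ in atTop,
      (⌊zf p n - ε⌋.toNat : ℝ) *
          (((n - 2 * ⌊zf p n - ε⌋.toNat).factorial : ℝ) /
            (((⌊zf p n - ε⌋.toNat - 1).factorial : ℝ) * ⌊zf p n - ε⌋.toNat.factorial *
              (n - 4 * ⌊zf p n - ε⌋.toNat + 1).factorial)) /
          ((n.factorial : ℝ) / ((⌊zf p n - ε⌋.toNat.factorial : ℝ) *
            ⌊zf p n - ε⌋.toNat.factorial * (n - 2 * ⌊zf p n - ε⌋.toNat).factorial))
        ≤ (⌊zf p n - ε⌋.toNat : ℝ) ^ 2 / n := by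
  filter_upwards [eventual_bounds' p ε hp0 hp1 hε] with n hn
  exact key_real' n _ hn.1 hn.2

end
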